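/- For every even natural number n, the sum a(0)+a(1)+⋯+a(n) of the first n+1 odious numbers equals n² + 3n/2 + 1 − t(n), where t(n) is the Thue–Morse sequence. -/

import Mathlib

/-- Sum of base-`d` digits of `n`. -/
def sdig (d n : ℕ) : ℕ := (Nat.digits d n).sum

/-- `t_d(n)`: base-`d` digit sum of `n`, reduced mod `d`. -/
def td (d n : ℕ) : ℕ := sdig d n % d

/-- `a_{j,d}(n)`: n-th natural (0-indexed, increasing) with base-`d` digit sum ≡ j mod d. -/
noncomputable def agen (d j n : ℕ) : ℕ := Nat.nth (fun k => sdig d k % d = j) n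

/-- n-th odious number (binary digit sum odd), 0-indexed increasing. -/
noncomputable def odious (n : ℕ) : ℕ := Nat.nth (fun k => (Nat.digits 2 k).sum % 2 = 1) n

/-- n-th evil number (binary digit sum even), 0-indexed increasing. -/
noncomputable def evil (n : ℕ) : ℕ := Nat.nth (fun k => (Nat.digits 2 k).sum % 2 = 0) n

/-- Thue–Morse sequence: parity of the binary digit sum. -/
def tm (n : ℕ) : ℕ := (Nat.digits 2 n).sum % 2

lemma tm_lt_two (n : ℕ) : tm n < 2 := Nat.mod_lt _ (by norm_num)

lemma tm_even (n : ℕ) : tm (2 * n) = tm n := by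
  rcases Nat.eq_zero_or_pos n with h | h
  · simp [h]
  · unfold tm
    rw [Nat.digits_def' (by norm_num : 1 < 2) (by omega : 0 < 2 * n)]
    simp [Nat.mul_mod_right, Nat.mul_div_cancel_left _ (by norm_num : 0 < 2)]

lemma tm_odd (n : ℕ) : tm (2 * n + 1) = (1 + tm n) % 2 := by
  unfold tm
  rw [Nat.digits_def' (by norm_num : 1 < 2) (by omega : 0 < 2 * n + 1)]
  have h1 : (2 * n + 1) % 2 = 1 := by omega
  have h2 : (2 * n + 1) / 2 = n := by omega
  rw [h1, h2]
  simp [Nat.add_mod]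

lemma count_even (m : ℕ) :
    Nat.count (fun k => (Nat.digits 2 k).sum % 2 = 1) (2 * m) = m := by
  induction m with
  | zero => simp
  | succ m ih =>
    have he : 2 * (m + 1) = (2 * m + 1) + 1 := by ring
    rw [he, Nat.count_succ, Nat.count_succ, ih]
    have h1 : tm (2 * m) = tm m := tm_even m
    have h2 : tm (2 * m + 1) = (1 + tm m) % 2 := tm_odd m
    have h3 := tm_lt_two m
    unfold tm at h1 h2 h3
    by_cases h : (Nat.digits 2 m).sum % 2 = 1
    · rw [if_pos (by omega : (Nat.digits 2 (2 * m)).sum % 2 = 1),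
        if_neg (by omega : ¬ ((Nat.digits 2 (2 * m + 1)).sum % 2 = 1))]
    · rw [if_neg (by omega : ¬ ((Nat.digits 2 (2 * m)).sum % 2 = 1)),
        if_pos (by omega : (Nat.digits 2 (2 * m + 1)).sum % 2 = 1)]

lemma odious_eq (k : ℕ) : odious k = 2 * k + 1 - tm k := by
  have h1 : tm (2 * k) = tm k := tm_even k
  have h2 : tm (2 * k + 1) = (1 + tm k) % 2 := tm_odd k
  have h3 := tm_lt_two k
  by_cases h : tm k = 1
  · have hp : (Nat.digits 2 (2 * k)).sum % 2 = 1 := by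
      unfold tm at h1 h; omega
    have hc : Nat.count (fun j => (Nat.digits 2 j).sum % 2 = 1) (2 * k) = k :=
      count_even k
    have hn := Nat.nth_count (p := fun j => (Nat.digits 2 j).sum % 2 = 1) hp
    rw [hc] at hn
    unfold odious
    rw [hn, h]; omega
  · have h0 : tm k = 0 := by omega
    have hp : (Nat.digits 2 (2 * k + 1)).sum % 2 = 1 := by
      unfold tm at h2 h0; omega
    have hc : Nat.count (fun j => (Nat.digits 2 j).sum % 2 = 1) (2 * k + 1) = k := by
      rw [Nat.count_succ, count_even,
        if_neg (by unfold tm at h1 h0; omega : ¬ ((Nat.digits 2 (2 * k)).sum % 2 = 1))]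
      omega
    have hn := Nat.nth_count (p := fun j => (Nat.digits 2 j).sum % 2 = 1) hp
    rw [hc] at hn
    unfold odious
    rw [hn, h0]; omega

lemma tm_sum (m : ℕ) :
    ∑ k ∈ Finset.range (2 * m + 1), tm k = m + tm (2 * m) := by
  induction m with
  | zero => simp [tm]
  | succ m ih =>
    have he : 2 * (m + 1) + 1 = (2 * m + 1) + 1 + 1 := by ring
    rw [he, Finset.sum_range_succ, Finset.sum_range_succ, ih]
    have h1 : tm (2 * m) = tm m := tm_even m
    have h2 : tm (2 * m + 1) = (1 + tm m) % 2 := tm_odd m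
    have h3 := tm_lt_two m
    have h4 : 2 * m + 1 + 1 = 2 * (m + 1) := by ring
    rw [h4]
    omega

lemma odd_sum (N : ℕ) : ∑ k ∈ Finset.range N, (2 * k + 1) = N ^ 2 := by
  induction N with
  | zero => simp
  | succ N ih => rw [Finset.sum_range_succ, ih]; ring

theorem stmt9 (n : ℕ) (hn : Even n) :
    (2 * ∑ k ∈ Finset.range (n + 1), odious k : ℤ) =
      2 * n ^ 2 + 3 * n + 2 - 2 * tm n := by
  obtain ⟨m, hm⟩ := hn
  have hn2 : n = 2 * m := by omega
  subst hn2
  have h3 := tm_lt_two (2 * m)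
  have hle : ∑ k ∈ Finset.range (2 * m + 1), tm k ≤ ∑ k ∈ Finset.range (2 * m + 1), (2 * k + 1) := by
    apply Finset.sum_le_sum
    intro k _
    have := tm_lt_two k; omega
  have hsum : ∑ k ∈ Finset.range (2 * m + 1), odious k
      = (2 * m + 1) ^ 2 - (m + tm (2 * m)) := by
    have : ∑ k ∈ Finset.range (2 * m + 1), odious k
        = (∑ k ∈ Finset.range (2 * m + 1), (2 * k + 1)) - ∑ k ∈ Finset.range (2 * m + 1), tm k := by
      rw [← Finset.sum_tsub_distrib]
      · exact Finset.sum_congr rfl fun k _ => odious_eq k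
      · intro k _
        have := tm_lt_two k; omega
    rw [this, odd_sum, tm_sum]
  rw [hsum]
  have hle2 : m + tm (2 * m) ≤ (2 * m + 1) ^ 2 := by nlinarith
  rw [Nat.cast_sub hle2]
  push_cast
  ring_nf
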